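/- Consider the family of holomorphic discs attached to the quadric E₀' = {Re z_j = 0, j=1,…,n−2; 2Re z_{n−1} = |w|²} in ℂⁿ given by z_j(ζ) = iy_j (j ≤ n−2), z_{n−1}(ζ) = (1/2)(cc̄ + t²(λ²+1)/(1+λ)²) + tλc̄/(1+λ) + iy_{n−1} + (tc̄/(1+λ) + t²λ/(1+λ)²)ζ, w(ζ) = c + t(λ+ζ)/(1+λ). Then: (i) each disc maps bΔ into E₀'; (ii) for any t > 0, lim_{λ→1} f(t,λ,y,c)(−λ) = (iy₁,…,iy_{n−2}, (1/2)cc̄ + iy_{n−1}, c) ∈ E₀'; (iii) for fixed t > 0, the differential of (λ,y,c) ↦ f(t,λ,y,c)(−λ) at (1,0,0) has rank n+2. -/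

import Mathlib

noncomputable section
open Complex Metric

/-- The Boggess–Pitts family of holomorphic Bishop discs attached to the quadric
`E₀' = {Re z_j = 0 (j ≤ n−2), 2 Re z_{n−1} = |w|²}`; here the `z`-coordinates are
indexed by `Fin (m+1)` with `m = n − 2`, and `w ∈ ℂ`. -/
def bdisc (m : ℕ) (t lam : ℝ) (y : Fin (m+1) → ℝ) (c : ℂ) (ζ : ℂ) :
    (Fin (m+1) → ℂ) × ℂ :=
  (fun j => if (j : ℕ) < m then Complex.I * (y j)
    else (1/2 : ℂ) * (c * (starRingEnd ℂ) c
        + ((t:ℂ)^2 * ((lam:ℂ)^2 + 1)) / (1 + (lam:ℂ))^2)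
      + ((t:ℂ) * (lam:ℂ) / (1 + (lam:ℂ))) * (starRingEnd ℂ) c
      + Complex.I * (y j)
      + (((t:ℂ) * (starRingEnd ℂ) c) / (1 + (lam:ℂ))
          + (t:ℂ)^2 * (lam:ℂ) / (1 + (lam:ℂ))^2) * ζ,
    c + (t:ℂ) * ((lam:ℂ) + ζ) / (1 + (lam:ℂ)))

/-- The quadric `E₀'`. -/
def E0' (m : ℕ) : Set ((Fin (m+1) → ℂ) × ℂ) :=
  {Z | (∀ j : Fin (m+1), (j : ℕ) < m → (Z.1 j).re = 0) ∧
    2 * (Z.1 (Fin.last m)).re = Complex.normSq Z.2}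

set_option maxHeartbeats 1000000 in
lemma part1 (m : ℕ) : ∀ t lam : ℝ, 0 < t → 0 ≤ lam → lam ≤ 1 → ∀ y : Fin (m+1) → ℝ, ∀ c : ℂ,
      ∀ ζ : ℂ, ‖ζ‖ = 1 → bdisc m t lam y c ζ ∈ E0' m := by
  intro t lam ht hlam0 hlam1 y c ζ hζ
  have hden : (1:ℂ) + (lam:ℂ) ≠ 0 := by
    intro h
    have h2 : ((1 + lam : ℝ) : ℂ) = 0 := by push_cast; exact h
    have : (1 + lam : ℝ) = 0 := by exact_mod_cast h2
    linarith
  have hu : ζ * (starRingEnd ℂ) ζ = 1 := by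
    rw [Complex.mul_conj, Complex.normSq_eq_norm_sq, hζ]; norm_num
  constructor
  · intro j hj
    simp [bdisc, if_pos hj]
  · have hlast : ¬ ((Fin.last m : Fin (m+1)) : ℕ) < m := by simp
    simp only [bdisc, if_neg hlast]
    set z : ℂ := (1/2 : ℂ) * (c * (starRingEnd ℂ) c
        + ((t:ℂ)^2 * ((lam:ℂ)^2 + 1)) / (1 + (lam:ℂ))^2)
      + ((t:ℂ) * (lam:ℂ) / (1 + (lam:ℂ))) * (starRingEnd ℂ) c
      + Complex.I * (y (Fin.last m))
      + (((t:ℂ) * (starRingEnd ℂ) c) / (1 + (lam:ℂ))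
          + (t:ℂ)^2 * (lam:ℂ) / (1 + (lam:ℂ))^2) * ζ with hz
    set w : ℂ := c + (t:ℂ) * ((lam:ℂ) + ζ) / (1 + (lam:ℂ)) with hw
    set a : ℂ := (t:ℂ)/(1+(lam:ℂ)) with ha
    have h1 : ((t:ℂ)^2 * ((lam:ℂ)^2 + 1)) / (1 + (lam:ℂ))^2 = a^2*((lam:ℂ)^2+1) := by
      rw [ha]; field_simp
    have h2 : (t:ℂ) * (lam:ℂ) / (1 + (lam:ℂ)) = a * (lam:ℂ) := by
      rw [ha]; field_simp
    have h3 : ((t:ℂ) * (starRingEnd ℂ) c) / (1 + (lam:ℂ)) = a * (starRingEnd ℂ) c := by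
      rw [ha]; field_simp
    have h4 : (t:ℂ)^2 * (lam:ℂ) / (1 + (lam:ℂ))^2 = a^2 * (lam:ℂ) := by
      rw [ha]; field_simp
    have h5 : (t:ℂ) * ((lam:ℂ) + ζ) / (1 + (lam:ℂ)) = a * ((lam:ℂ) + ζ) := by
      rw [ha]; field_simp
    have hca : (starRingEnd ℂ) a = a := by
      rw [ha]; simp [map_div₀, Complex.conj_ofReal]
    have key : z + (starRingEnd ℂ) z = w * (starRingEnd ℂ) w := by
      rw [hz, hw, h1, h2, h3, h4, h5]
      simp only [map_add, map_mul, map_pow, Complex.conj_ofReal, Complex.conj_I,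
        Complex.conj_conj, map_one, map_div₀, map_ofNat, hca]
      linear_combination (-(a^2)) * hu
    have h2' : 2 * z.re = (z + (starRingEnd ℂ) z).re := by
      rw [Complex.add_conj]; simp
    rw [h2', key, Complex.mul_conj]
    simp

abbrev V (m : ℕ) := ℝ × (Fin (m+1) → ℝ) × ℂ

def evec (m : ℕ) : Fin (m+1) → ℂ := fun j => if (j : ℕ) < m then 0 else 1

def rfun (t : ℝ) : ℝ → ℝ := fun s => t^2*(1-s)/(2*(1+s))

def ACLM (m : ℕ) : V m →L[ℝ] (Fin (m+1) → ℂ) :=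
  ContinuousLinearMap.pi (fun j => Complex.I •
    (Complex.ofRealCLM.comp ((ContinuousLinearMap.proj j).comp
      ((ContinuousLinearMap.fst ℝ (Fin (m+1) → ℝ) ℂ).comp
        (ContinuousLinearMap.snd ℝ ℝ ((Fin (m+1) → ℝ) × ℂ))))))

def BCLM (m : ℕ) : V m →L[ℝ] ℂ :=
  (ContinuousLinearMap.snd ℝ (Fin (m+1) → ℝ) ℂ).comp
    (ContinuousLinearMap.snd ℝ ℝ ((Fin (m+1) → ℝ) × ℂ))

def qfun (m : ℕ) (t : ℝ) : V m → ℂ :=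
  fun P => (1/2 : ℂ) * (P.2.2 * (starRingEnd ℂ) P.2.2) + ((rfun t P.1 : ℝ) : ℂ)

def G (m : ℕ) (t : ℝ) : V m → (Fin (m+1) → ℂ) × ℂ :=
  fun P => (ACLM m P + qfun m t P • evec m, BCLM m P)

-- sanity lemmas
lemma ACLM_apply (m : ℕ) (P : V m) (j : Fin (m+1)) :
    ACLM m P j = Complex.I * (P.2.1 j : ℂ) := by
  simp [ACLM, Complex.ofRealCLM_apply]

lemma BCLM_apply (m : ℕ) (P : V m) : BCLM m P = P.2.2 := rfl

lemma G_eq (m : ℕ) (t : ℝ) (P : V m) (h : -1 < P.1) :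
    bdisc m t P.1 P.2.1 P.2.2 (-(P.1:ℂ)) = G m t P := by
  have hden : (1:ℂ) + (P.1:ℂ) ≠ 0 := by
    intro hc
    have h2 : ((1 + P.1 : ℝ) : ℂ) = 0 := by push_cast; exact hc
    have : (1 + P.1 : ℝ) = 0 := by exact_mod_cast h2
    linarith
  unfold bdisc G
  refine Prod.ext ?_ ?_
  · funext j
    simp only [ACLM_apply, Pi.add_apply, Pi.smul_apply, evec, qfun, smul_eq_mul]
    by_cases hj : (j:ℕ) < m
    · simp [if_pos hj]
    · simp only [if_neg hj, mul_one]
      set lamC : ℂ := (P.1 : ℂ) with hlamC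
      set a : ℂ := (t:ℂ)/(1+lamC) with ha
      have h1 : ((t:ℂ)^2 * (lamC^2 + 1)) / (1 + lamC)^2 = a^2*(lamC^2+1) := by
        rw [ha]; field_simp
      have h2 : (t:ℂ) * lamC / (1 + lamC) = a * lamC := by
        rw [ha]; field_simp
      have h3 : ((t:ℂ) * (starRingEnd ℂ) P.2.2) / (1 + lamC) = a * (starRingEnd ℂ) P.2.2 := by
        rw [ha]; field_simp
      have h4 : (t:ℂ)^2 * lamC / (1 + lamC)^2 = a^2 * lamC := by
        rw [ha]; field_simp
      have h6 : ((rfun t P.1 : ℝ) : ℂ) = a^2 * (1 - lamC^2)/2 := by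
        rw [rfun, ha]
        push_cast
        rw [← hlamC]
        field_simp
        ring
      rw [h1, h2, h3, h4, h6]
      ring
  · show _ = P.2.2
    simp only [BCLM_apply]
    have : (P.1:ℂ) + -(P.1:ℂ) = 0 := by ring
    rw [this]
    simp

lemma G_cont (m : ℕ) (t : ℝ) (y : Fin (m+1) → ℝ) (c : ℂ) :
    ContinuousAt (fun lam : ℝ => G m t (lam, y, c)) 1 := by
  apply ContinuousAt.prodMk
  · apply ContinuousAt.add
    · exact ((ACLM m).continuous.comp (by fun_prop)).continuousAt
    · apply ContinuousAt.smul (f := fun x : ℝ => qfun m t (x, y, c)) (g := fun _ => evec m) _ continuousAt_const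
      unfold qfun
      show ContinuousAt (fun x : ℝ => (1/2:ℂ) * (c * (starRingEnd ℂ) c) + ((rfun t x : ℝ) : ℂ)) 1
      apply ContinuousAt.add continuousAt_const
      apply Complex.continuous_ofReal.continuousAt.comp
      unfold rfun
      apply ContinuousAt.div (by fun_prop) (by fun_prop)
      norm_num
  · exact ((BCLM m).continuous.comp (by fun_prop)).continuousAt

lemma G_val (m : ℕ) (t : ℝ) (y : Fin (m+1) → ℝ) (c : ℂ) :
    G m t (1, y, c) = ((fun j : Fin (m+1) => if (j : ℕ) < m then Complex.I * (y j)
            else (1/2 : ℂ) * (c * (starRingEnd ℂ) c) + Complex.I * (y (Fin.last m)),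
          c)) := by
  unfold G
  refine Prod.ext ?_ rfl
  funext j
  simp only [ACLM_apply, Pi.add_apply, Pi.smul_apply, evec, qfun, smul_eq_mul]
  by_cases hj : (j:ℕ) < m
  · simp [if_pos hj]
  · have hj' : j = Fin.last m := by
      have := j.isLt; apply Fin.ext; simp [Fin.last]; omega
    have hr : rfun t 1 = 0 := by simp [rfun]
    simp only [if_neg hj, mul_one, hr, hj']
    push_cast
    simp only [lt_irrefl m, if_false]
    ring

lemma part2 (m : ℕ) : ∀ t : ℝ, 0 < t → ∀ y : Fin (m+1) → ℝ, ∀ c : ℂ,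
      Filter.Tendsto (fun lam : ℝ => bdisc m t lam y c (-(lam:ℂ)))
        (nhdsWithin 1 (Set.Ico 0 1))
        (nhds ((fun j : Fin (m+1) => if (j : ℕ) < m then Complex.I * (y j)
            else (1/2 : ℂ) * (c * (starRingEnd ℂ) c) + Complex.I * (y (Fin.last m)),
          c))) := by
  intro t ht y c
  have h1 : Filter.Tendsto (fun lam : ℝ => G m t (lam, y, c))
      (nhdsWithin 1 (Set.Ico 0 1))
      (nhds ((fun j : Fin (m+1) => if (j : ℕ) < m then Complex.I * (y j)
            else (1/2 : ℂ) * (c * (starRingEnd ℂ) c) + Complex.I * (y (Fin.last m)),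
          c))) := by
    rw [← G_val m t y c]
    exact (G_cont m t y c).continuousWithinAt
  apply h1.congr'
  filter_upwards [eventually_mem_nhdsWithin] with lam hlam
  exact (G_eq m t (lam, y, c) (by simp only; linarith [hlam.1])).symm

lemma hr_deriv (t : ℝ) : HasDerivAt (rfun t) (-t^2/4) 1 := by
  unfold rfun
  have h1 : HasDerivAt (fun s : ℝ => t^2*(1-s)) (t^2 * (-1)) 1 :=
    HasDerivAt.const_mul (t^2) (HasDerivAt.const_sub 1 (hasDerivAt_id 1))
  have h2 : HasDerivAt (fun s : ℝ => 2*(1+s)) (2 * 1) 1 :=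
    HasDerivAt.const_mul 2 (HasDerivAt.const_add 1 (hasDerivAt_id 1))
  have h3 := h1.div h2 (by norm_num)
  refine h3.congr_deriv ?_
  norm_num
  ring

def LqCLM (m : ℕ) (t : ℝ) : V m →L[ℝ] ℂ :=
  (ContinuousLinearMap.fst ℝ ℝ ((Fin (m+1) → ℝ) × ℂ)).smulRight ((-(t:ℂ)^2)/4)

lemma hq_deriv (m : ℕ) (t : ℝ) : HasFDerivAt (qfun m t) (LqCLM m t) (1, 0, 0) := by
  have hf : HasFDerivAt (fun P : V m => P.2.2) (BCLM m) (1,0,0) := (BCLM m).hasFDerivAt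
  have hg : HasFDerivAt (fun P : V m => (starRingEnd ℂ) P.2.2)
      ((Complex.conjCLE.toContinuousLinearMap).comp (BCLM m)) (1,0,0) :=
    ((Complex.conjCLE.toContinuousLinearMap).comp (BCLM m)).hasFDerivAt
  have hA := (hf.mul' hg).const_mul (1/2 : ℂ)
  have h1 : HasFDerivAt (fun P : V m => rfun t P.1)
      ((1 : ℝ →L[ℝ] ℝ).smulRight (-t^2/4) |>.comp (ContinuousLinearMap.fst ℝ ℝ _)) (1,0,0) :=
    (hr_deriv t).hasFDerivAt.comp (g := rfun t) ((1,0,0) : V m) (hasFDerivAt_fst (𝕜 := ℝ) (p := ((1,0,0) : V m)))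
  have hB := Complex.ofRealCLM.hasFDerivAt.comp ((1,0,0) : V m) h1
  have hAB := hA.add hB
  have h0 : HasFDerivAt (qfun m t) _ (1,0,0) := hAB
  refine h0.congr_fderiv ?_
  ext v <;>
    simp [LqCLM, BCLM, Complex.real_smul, Complex.ofRealCLM_apply] <;>
    ring

lemma hG_deriv (m : ℕ) (t : ℝ) :
    HasFDerivAt (G m t)
      ((ACLM m + (LqCLM m t).smulRight (evec m)).prod (BCLM m)) (1, 0, 0) := by
  unfold G
  exact HasFDerivAt.prodMk ((ACLM m).hasFDerivAt.add ((hq_deriv m t).smul_const (evec m)))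
    (BCLM m).hasFDerivAt

lemma part3 (m : ℕ) : ∀ t : ℝ, 0 < t →
      Module.finrank ℝ
        (LinearMap.range
          ((fderiv ℝ
            (fun P : ℝ × (Fin (m+1) → ℝ) × ℂ =>
              bdisc m t P.1 P.2.1 P.2.2 (-(P.1:ℂ)))
            (1, 0, 0)).toLinearMap)) = m + 4 := by
  intro t ht
  set L := ((ACLM m + (LqCLM m t).smulRight (evec m)).prod (BCLM m)) with hL
  have hfd : fderiv ℝ
      (fun P : ℝ × (Fin (m+1) → ℝ) × ℂ => bdisc m t P.1 P.2.1 P.2.2 (-(P.1:ℂ)))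
      (1, 0, 0) = L := by
    have hU : IsOpen {P : V m | -1 < P.1} := isOpen_lt continuous_const continuous_fst
    have hmem : ((1,0,0) : V m) ∈ {P : V m | -1 < P.1} := by norm_num
    have heq : (fun P : V m => bdisc m t P.1 P.2.1 P.2.2 (-(P.1:ℂ)))
        =ᶠ[nhds ((1,0,0) : V m)] G m t := by
      filter_upwards [hU.mem_nhds hmem] with P hP using G_eq m t P hP
    rw [heq.fderiv_eq, (hG_deriv m t).fderiv]
  rw [hfd]
  have hinj : Function.Injective L := by
    rw [injective_iff_map_eq_zero]
    intro v hv
    have h2 : v.2.2 = 0 := congrArg Prod.snd hv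
    have h1 : ∀ j : Fin (m+1),
        Complex.I * (v.2.1 j : ℂ) + (v.1 • ((-(t:ℂ)^2)/4)) * (evec m j) = 0 := by
      intro j
      have := congrFun (congrArg Prod.fst hv) j
      simpa [hL, ContinuousLinearMap.prod_apply, ContinuousLinearMap.add_apply,
        ACLM_apply, ContinuousLinearMap.smulRight_apply, Pi.add_apply,
        Pi.smul_apply, smul_eq_mul, LqCLM] using this
    have hcast : v.1 • ((-(t:ℂ)^2)/4) = (((-(v.1 * t^2)/4) : ℝ) : ℂ) := by
      push_cast [Complex.real_smul]; ring
    have hlastkey : v.1 = 0 ∧ v.2.1 (Fin.last m) = 0 := by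
      have h := h1 (Fin.last m)
      have hlast : ¬ ((Fin.last m : Fin (m+1)) : ℕ) < m := by simp
      rw [evec, if_neg hlast, mul_one, hcast] at h
      have h_re := congrArg Complex.re h
      have h_im := congrArg Complex.im h
      simp [Complex.add_re, Complex.add_im, Complex.mul_re, Complex.mul_im,
        Complex.I_re, Complex.I_im, Complex.ofReal_re, Complex.ofReal_im,
        ← Complex.ofReal_pow] at h_re h_im
      have ht2 : t ≠ 0 := ne_of_gt ht
      constructor
      · rcases h_re with h' | h'
        · exact h'
        · exact absurd h' ht2
      · rcases h_re with h' | h'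
        · simpa [h'] using h_im
        · exact absurd h' ht2
    have hlam : v.1 = 0 := hlastkey.1
    have hy : ∀ j, v.2.1 j = 0 := by
      intro j
      by_cases hj : (j:ℕ) < m
      · have h := h1 j
        rw [evec, if_pos hj, mul_zero, add_zero] at h
        rcases mul_eq_zero.1 h with h' | h'
        · exact absurd h' Complex.I_ne_zero
        · exact_mod_cast h'
      · have hj' : j = Fin.last m := by
          have := j.isLt; apply Fin.ext; simp [Fin.last]; omega
        rw [hj']
        exact hlastkey.2
    have : v = (0 : V m) := by
      refine Prod.ext hlam (Prod.ext ?_ h2)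
      funext j; exact hy j
    exact this
  have hinj' : Function.Injective (L.toLinearMap) := hinj
  rw [LinearMap.finrank_range_of_inj hinj']
  rw [Module.finrank_prod, Module.finrank_prod, Module.finrank_self,
    Module.finrank_pi, Complex.finrank_real_complex]
  simp
  omega

/-- (i) each disc of the family maps `bΔ` into `E₀'`;
(ii) for `t > 0`, `f(t,λ,y,c)(−λ) → (iy₁,…,iy_{n−2}, ½cc̄ + iy_{n−1}, c) ∈ E₀'`
as `λ → 1`; (iii) for fixed `t > 0` the differential of
`(λ,y,c) ↦ f(t,λ,y,c)(−λ)` at `(1,0,0)` has rank `n + 2` (`= m + 4`). -/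
theorem stmt_18 (m : ℕ) :
    (∀ t lam : ℝ, 0 < t → 0 ≤ lam → lam ≤ 1 → ∀ y : Fin (m+1) → ℝ, ∀ c : ℂ,
      ∀ ζ : ℂ, ‖ζ‖ = 1 → bdisc m t lam y c ζ ∈ E0' m) ∧
    (∀ t : ℝ, 0 < t → ∀ y : Fin (m+1) → ℝ, ∀ c : ℂ,
      Filter.Tendsto (fun lam : ℝ => bdisc m t lam y c (-(lam:ℂ)))
        (nhdsWithin 1 (Set.Ico 0 1))
        (nhds ((fun j : Fin (m+1) => if (j : ℕ) < m then Complex.I * (y j)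
            else (1/2 : ℂ) * (c * (starRingEnd ℂ) c) + Complex.I * (y (Fin.last m)),
          c)))) ∧
    (∀ t : ℝ, 0 < t →
      Module.finrank ℝ
        (LinearMap.range
          ((fderiv ℝ
            (fun P : ℝ × (Fin (m+1) → ℝ) × ℂ =>
              bdisc m t P.1 P.2.1 P.2.2 (-(P.1:ℂ)))
            (1, 0, 0)).toLinearMap)) = m + 4) := by
  exact ⟨part1 m, part2 m, part3 m⟩
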